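/- Let a, b be distinct points of the open unit disk 𝔹² ⊂ ℂ, and let u, v be points with |u| = |v| = 1 lying on the line through a and b, ordered so that u, a, b, v occur in this order on the line. Let m be the Euclidean distance from the origin to the line through a and b, and set h(a,b) := log((|u−b|·|a−v|)/(|u−a|·|b−v|)) and ρ(a,b) := 2·arsinh(|a−b|/√((1−|a|²)(1−|b|²))). Then h(a,b) ≤ ρ(a,b) ≤ h(a,b)/√(1−m²). -/

import Mathlib

open Complex
open Real

private lemma sinh_superlinear {c r : ℝ} (hc : 1 ≤ c) (hr : 0 ≤ r) :
    c * Real.sinh r ≤ Real.sinh (c * r) := by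
  have hc0 : (0:ℝ) < c := lt_of_lt_of_le one_pos hc
  have hmono : MonotoneOn (fun x => Real.sinh (c*x) - c * Real.sinh x) (Set.Ici 0) := by
    have hderiv : ∀ x : ℝ, HasDerivAt (fun x => Real.sinh (c*x) - c * Real.sinh x)
        (Real.cosh (c*x) * c - c * Real.cosh x) x := by
      intro x
      have A : HasDerivAt (fun x => Real.sinh (c*x)) (Real.cosh (c*x) * c) x := by
        simpa [Function.comp_def] using (Real.hasDerivAt_sinh (c*x)).comp x ((hasDerivAt_id x).const_mul c)
      exact A.sub ((Real.hasDerivAt_sinh x).const_mul c)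
    apply monotoneOn_of_deriv_nonneg (convex_Ici 0)
    · exact (Continuous.continuousOn (by continuity))
    · intro x _; exact ((hderiv x).differentiableAt).differentiableWithinAt
    · intro x hx
      have hx' : 0 < x := by simpa using hx
      rw [(hderiv x).deriv]
      have hxx : Real.cosh x ≤ Real.cosh (c*x) := by
        rw [Real.cosh_le_cosh]
        rw [abs_of_pos hx', abs_of_pos (by nlinarith : (0:ℝ) < c*x)]
        nlinarith
      nlinarith
  have h0 := hmono (Set.self_mem_Ici) (Set.mem_Ici.mpr hr) hr
  simp only [mul_zero, Real.sinh_zero] at h0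
  linarith

private lemma arsinh_mul_le {c w : ℝ} (hc : 1 ≤ c) (hw : 0 ≤ w) :
    Real.arsinh (c * w) ≤ c * Real.arsinh w := by
  have h1 : 0 ≤ Real.arsinh w := Real.arsinh_nonneg_iff.mpr hw
  have h2 : c * w ≤ Real.sinh (c * Real.arsinh w) := by
    calc c * w = c * Real.sinh (Real.arsinh w) := by rw [Real.sinh_arsinh]
    _ ≤ Real.sinh (c * Real.arsinh w) := sinh_superlinear hc h1
  calc Real.arsinh (c * w) ≤ Real.arsinh (Real.sinh (c * Real.arsinh w)) :=
        Real.arsinh_le_arsinh.mpr h2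
  _ = c * Real.arsinh w := Real.arsinh_sinh _

private lemma log_eq_two_arsinh {α β : ℝ} (h0 : 0 < α) (hαβ : α < β) (h1 : β < 1) :
    Real.log ((β*(1-α))/(α*(1-β))) =
      2 * Real.arsinh ((β-α)/(2*Real.sqrt (α*β*(1-α)*(1-β)))) := by
  set Q : ℝ := α*β*(1-α)*(1-β) with hQdef
  have hβ : 0 < β := h0.trans hαβ
  have h1α : 0 < 1 - α := by linarith
  have h1β : 0 < 1 - β := by linarith
  have hQpos : 0 < Q := by
    rw [hQdef]; exact mul_pos (mul_pos (mul_pos h0 hβ) h1α) h1β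
  have hsq : Real.sqrt Q ^ 2 = Q := Real.sq_sqrt hQpos.le
  have hsqpos : 0 < Real.sqrt Q := Real.sqrt_pos.mpr hQpos
  set w : ℝ := (β-α)/(2*Real.sqrt Q) with hwdef
  have hnum : 0 < α + β - 2*α*β := by nlinarith
  have hw1 : Real.sqrt (1 + w^2) = (α+β-2*α*β)/(2*Real.sqrt Q) := by
    have h2 : (1:ℝ) + w^2 = ((α+β-2*α*β)/(2*Real.sqrt Q))^2 := by
      rw [hwdef]; field_simp; nlinarith [hsq]
    rw [h2, Real.sqrt_sq (by positivity)]
  have harsinh : Real.arsinh w = Real.log (w + Real.sqrt (1 + w^2)) := by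
    rw [← Real.exp_arsinh, Real.log_exp]
  have hsum : w + Real.sqrt (1+w^2) = β*(1-α)/Real.sqrt Q := by
    rw [hw1, hwdef]; field_simp; ring
  have hXeq : (β*(1-α)/Real.sqrt Q)^2 = β*(1-α)/(α*(1-β)) := by
    rw [div_pow, hsq, hQdef]
    field_simp
  have hy : (0:ℝ) < β*(1-α)/Real.sqrt Q := by positivity
  rw [harsinh, hsum, ← hXeq, pow_two, Real.log_mul hy.ne' hy.ne']
  ring


theorem repr_lemma {a b u v : ℂ}
    (hab : a ≠ b) (hua : a ∈ segment ℝ u b) (hbv : b ∈ segment ℝ a v) :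
    ∃ α β : ℝ, 0 ≤ α ∧ α ≤ β ∧ β ≤ 1 ∧
      a = ((1-α : ℝ) : ℂ) * u + ((α : ℝ) : ℂ) * v ∧
      b = ((1-β : ℝ) : ℂ) * u + ((β : ℝ) : ℂ) * v := by
  obtain ⟨p, p', hp, hp', hpp', hpa⟩ := hua
  obtain ⟨q', q, hq', hq, hqq', hqb⟩ := hbv
  have hp'' : p' = 1 - p := by linarith
  have hq'' : q' = 1 - q := by linarith
  subst hp'' hq''
  rw [Complex.real_smul, Complex.real_smul] at hpa hqb
  push_cast at hpa hqb
  have hp1 : p ≤ 1 := by linarith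
  have hq1 : q ≤ 1 := by linarith
  have hppos : 0 < p := by
    rcases hp.lt_or_eq with h | h
    · exact h
    · exfalso; apply hab; rw [← hpa, ← h]; push_cast; ring
  have hD : 0 < p + q - p*q := by nlinarith [mul_nonneg (by linarith : (0:ℝ) ≤ 1-p) hq]
  set D := p + q - p*q with hDdef
  have hDC : (D:ℂ) ≠ 0 := by exact_mod_cast hD.ne'
  refine ⟨(1-p)*q/D, q/D, by positivity, ?_, ?_, ?_, ?_⟩
  · gcongr
    nlinarith
  · rw [div_le_one hD]; nlinarith
  · have hA : (D:ℂ) * a = (p:ℂ) * u + (((1-p)*q : ℝ):ℂ) * v := by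
      rw [hDdef]; push_cast
      linear_combination (-1 : ℂ) * hpa - ((1:ℂ)-(p:ℂ)) * hqb
    apply mul_left_cancel₀ hDC
    rw [hA]
    have e1 : D * (1-(1-p)*q/D) = p := by field_simp; rw [hDdef]; ring
    have e2 : D * ((1-p)*q/D) = (1-p)*q := by field_simp
    calc (p:ℂ) * u + (((1-p)*q : ℝ):ℂ) * v
        = ((D * (1-(1-p)*q/D) : ℝ):ℂ) * u + ((D * ((1-p)*q/D) : ℝ):ℂ) * v := by
          rw [e1, e2]
      _ = (D:ℂ) * (((1-(1-p)*q/D : ℝ):ℂ) * u + (((1-p)*q/D : ℝ):ℂ) * v) := by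
          push_cast; ring
  · have hB : (D:ℂ) * b = (((1-q)*p : ℝ):ℂ) * u + (q:ℂ) * v := by
      rw [hDdef]; push_cast
      linear_combination (-(1:ℂ)+(q:ℂ)) * hpa - (1:ℂ) * hqb
    apply mul_left_cancel₀ hDC
    rw [hB]
    have e1 : D * (1-q/D) = (1-q)*p := by field_simp; rw [hDdef]; ring
    have e2 : D * (q/D) = q := by field_simp
    calc (((1-q)*p : ℝ):ℂ) * u + (q:ℝ) * v
        = ((D * (1-q/D) : ℝ):ℂ) * u + ((D * (q/D) : ℝ):ℂ) * v := by rw [e1, e2]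
      _ = (D:ℂ) * (((1-q/D : ℝ):ℂ) * u + ((q/D : ℝ):ℂ) * v) := by push_cast; ring

set_option maxHeartbeats 1000000 in
theorem stmt_7 (a b u v : ℂ) (ha : ‖a‖ < 1) (hb : ‖b‖ < 1) (hab : a ≠ b)
    (hu : ‖u‖ = 1) (hv : ‖v‖ = 1)
    (hua : a ∈ segment ℝ u b) (hbv : b ∈ segment ℝ a v) :
    Real.log ((‖u - b‖ * ‖a - v‖) /
        (‖u - a‖ * ‖b - v‖)) ≤
      2 * Real.arsinh (‖a - b‖ /
        Real.sqrt ((1 - (‖a‖)^2) * (1 - (‖b‖)^2))) ∧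
    2 * Real.arsinh (‖a - b‖ /
        Real.sqrt ((1 - (‖a‖)^2) * (1 - (‖b‖)^2))) ≤
      Real.log ((‖u - b‖ * ‖a - v‖) /
          (‖u - a‖ * ‖b - v‖)) /
        Real.sqrt (1 - (Metric.infDist (0 : ℂ) {z : ℂ | ∃ t : ℝ, z = a + t • (b - a)})^2) := by
  obtain ⟨α, β, hα0, hαβ, hβ1, haeq, hbeq⟩ := repr_lemma hab hua hbv
  have hu1 : Complex.normSq u = 1 := by rw [← Complex.sq_norm, hu]; norm_num
  have hv1 : Complex.normSq v = 1 := by rw [← Complex.sq_norm, hv]; norm_num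
  set k : ℝ := (u * (starRingEnd ℂ) v).re with hkdef
  set E : ℝ := ‖u - v‖ with hEdef
  have hE0 : 0 ≤ E := norm_nonneg _
  have hE2 : E^2 = 2 - 2*k := by
    rw [hEdef, Complex.sq_norm, Complex.normSq_sub, hu1, hv1, hkdef]; ring
  have hkey : ∀ r : ℝ, Complex.normSq (((1-r : ℝ):ℂ)*u + (r:ℂ)*v) = 1 - r*(1-r)*E^2 := by
    intro r
    rw [Complex.normSq_add, Complex.normSq_mul, Complex.normSq_mul,
      Complex.normSq_ofReal, Complex.normSq_ofReal, hu1, hv1]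
    rw [show ((((1-r:ℝ):ℂ)*u) * (starRingEnd ℂ) ((r:ℂ) * v)) = (((1-r)*r:ℝ):ℂ) * (u * (starRingEnd ℂ) v) by
      rw [map_mul, Complex.conj_ofReal]; push_cast; ring]
    rw [Complex.re_ofReal_mul, ← hkdef]
    linear_combination (r*(1-r)) * hE2
  have hEle : E ≤ 2 := by
    have h1 : ‖u - v‖ ≤ ‖u‖ + ‖v‖ := norm_sub_le u v
    simp only [hu, hv] at h1
    rw [hEdef]; linarith
  have h1a : 1 - (‖a‖)^2 = α*(1-α)*E^2 := by
    rw [Complex.sq_norm, haeq, hkey α]; ring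
  have h1b : 1 - (‖b‖)^2 = β*(1-β)*E^2 := by
    rw [Complex.sq_norm, hbeq, hkey β]; ring
  have hapos : 0 < 1 - (‖a‖)^2 := by nlinarith [norm_nonneg a]
  have hbpos : 0 < 1 - (‖b‖)^2 := by nlinarith [norm_nonneg b]
  have hprod_a : 0 < α*(1-α)*E^2 := h1a ▸ hapos
  have hprod_b : 0 < β*(1-β)*E^2 := h1b ▸ hbpos
  have hE2pos : 0 < E^2 := by nlinarith [sq_nonneg (E*(2*α-1)), hprod_a]
  have hEpos : 0 < E := by nlinarith [hE2pos]
  have hαα : 0 < α*(1-α) := by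
    by_contra h
    push_neg at h
    nlinarith [hE2pos, hprod_a]
  have hββ : 0 < β*(1-β) := by
    by_contra h
    push_neg at h
    nlinarith [hE2pos, hprod_b]
  have hα0' : 0 < α := by nlinarith [hαα]
  have hα1 : α < 1 := by nlinarith [hαα]
  have hβ0 : 0 < β := by nlinarith [hββ]
  have hβ1' : β < 1 := by nlinarith [hββ]
  have hablem : a - b = ((β-α : ℝ):ℂ) * (u - v) := by rw [haeq, hbeq]; push_cast; ring
  have hαβlt : α < β := by
    rcases hαβ.lt_or_eq with h | h
    · exact h
    · exfalso; apply hab; rw [← sub_eq_zero, hablem, ← h]; push_cast; ring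
  -- norm identities
  have habs_ua : ‖u - a‖ = α * E := by
    rw [show u - a = ((α:ℝ):ℂ) * (u - v) by rw [haeq]; push_cast; ring,
      norm_mul, Complex.norm_real, Real.norm_eq_abs, _root_.abs_of_nonneg hα0, hEdef]
  have habs_av : ‖a - v‖ = (1-α) * E := by
    rw [show a - v = ((1-α:ℝ):ℂ) * (u - v) by rw [haeq]; push_cast; ring,
      norm_mul, Complex.norm_real, Real.norm_eq_abs, _root_.abs_of_nonneg (by linarith : (0:ℝ) ≤ 1-α), hEdef]
  have habs_ub : ‖u - b‖ = β * E := by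
    rw [show u - b = ((β:ℝ):ℂ) * (u - v) by rw [hbeq]; push_cast; ring,
      norm_mul, Complex.norm_real, Real.norm_eq_abs, _root_.abs_of_nonneg (by linarith : (0:ℝ) ≤ β), hEdef]
  have habs_bv : ‖b - v‖ = (1-β) * E := by
    rw [show b - v = ((1-β:ℝ):ℂ) * (u - v) by rw [hbeq]; push_cast; ring,
      norm_mul, Complex.norm_real, Real.norm_eq_abs, _root_.abs_of_nonneg (by linarith : (0:ℝ) ≤ 1-β), hEdef]
  have habs_ab : ‖a - b‖ = (β-α) * E := by
    rw [hablem, norm_mul, Complex.norm_real, Real.norm_eq_abs, _root_.abs_of_nonneg (by linarith : (0:ℝ) ≤ β-α), hEdef]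
  have hlogarg : (‖u-b‖ * ‖a-v‖) / (‖u-a‖ * ‖b-v‖)
      = (β*(1-α))/(α*(1-β)) := by
    rw [habs_ub, habs_av, habs_ua, habs_bv]
    rw [show β * E * ((1-α) * E) = (β*(1-α)) * E^2 by ring,
      show α * E * ((1-β) * E) = (α*(1-β)) * E^2 by ring]
    rw [mul_div_mul_right _ _ (by positivity : E^2 ≠ 0)]
  have hQpos : 0 < α*β*(1-α)*(1-β) := by
    have := mul_pos (mul_pos (mul_pos hα0' hβ0) (by linarith : (0:ℝ) < 1-α)) (by linarith : (0:ℝ) < 1-β)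
    nlinarith [this]
  have hsqQ : Real.sqrt (α*β*(1-α)*(1-β)) ^ 2 = α*β*(1-α)*(1-β) := Real.sq_sqrt hQpos.le
  have hsqQpos : 0 < Real.sqrt (α*β*(1-α)*(1-β)) := Real.sqrt_pos.mpr hQpos
  have hsqrtprod : Real.sqrt ((1 - (‖a‖)^2) * (1 - (‖b‖)^2))
      = Real.sqrt (α*β*(1-α)*(1-β)) * E^2 := by
    rw [h1a, h1b,
      show α*(1-α)*E^2*(β*(1-β)*E^2) = (Real.sqrt (α*β*(1-α)*(1-β)) * E^2)^2 by
        rw [mul_pow, hsqQ]; ring]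
    exact Real.sqrt_sq (by positivity)
  have harg : ‖a-b‖ / Real.sqrt ((1 - (‖a‖)^2) * (1 - (‖b‖)^2))
      = (2/E) * ((β-α)/(2*Real.sqrt (α*β*(1-α)*(1-β)))) := by
    rw [habs_ab, hsqrtprod]
    field_simp
  -- infDist
  have hSne : Set.Nonempty {z : ℂ | ∃ t : ℝ, z = a + t • (b - a)} := ⟨a, 0, by simp⟩
  have hmem : ∀ z ∈ {z : ℂ | ∃ t : ℝ, z = a + t • (b - a)},
      ∃ g : ℝ, z = ((1-g : ℝ):ℂ)*u + (g:ℂ)*v := by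
    rintro z ⟨t, rfl⟩
    refine ⟨α + t*(β-α), ?_⟩
    rw [haeq, hbeq, Complex.real_smul]
    push_cast
    ring
  have hlower : ∀ z ∈ {z : ℂ | ∃ t : ℝ, z = a + t • (b - a)},
      Real.sqrt (1 - E^2/4) ≤ dist 0 z := by
    intro z hz
    obtain ⟨g, rfl⟩ := hmem z hz
    rw [dist_comm, Complex.dist_eq, sub_zero, Complex.norm_def, hkey g]
    apply Real.sqrt_le_sqrt
    nlinarith [sq_nonneg (g - 1/2), sq_nonneg E]
  have hmid_mem : ((1 - (1/2 : ℝ) : ℝ):ℂ)*u + (((1/2:ℝ)):ℂ)*v ∈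
      {z : ℂ | ∃ t : ℝ, z = a + t • (b - a)} := by
    refine ⟨(1/2 - α)/(β-α), ?_⟩
    rw [haeq, hbeq, Complex.real_smul]
    have hβα : (β - α) ≠ 0 := sub_ne_zero.mpr hαβlt.ne'
    push_cast
    have hβαC : ((β:ℂ) - (α:ℂ)) ≠ 0 := sub_ne_zero.mpr (by exact_mod_cast hαβlt.ne')
    field_simp
    ring
  have hupper : Metric.infDist (0:ℂ) {z : ℂ | ∃ t : ℝ, z = a + t • (b - a)}
      ≤ Real.sqrt (1 - E^2/4) := by
    refine le_trans (Metric.infDist_le_dist_of_mem hmid_mem) ?_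
    rw [dist_comm, Complex.dist_eq, sub_zero, Complex.norm_def, hkey (1/2)]
    apply le_of_eq
    congr 1
    ring
  have hmlow : Real.sqrt (1 - E^2/4) ≤ Metric.infDist (0:ℂ) {z : ℂ | ∃ t : ℝ, z = a + t • (b - a)} := by
    by_contra hcon
    push_neg at hcon
    obtain ⟨z, hzS, hzd⟩ := (Metric.infDist_lt_iff hSne).mp hcon
    exact absurd hzd (not_lt.mpr (hlower z hzS))
  have hfrac : (0:ℝ) ≤ 1 - E^2/4 := by nlinarith
  have hform : Real.sqrt (1 - (Metric.infDist (0:ℂ) {z : ℂ | ∃ t : ℝ, z = a + t • (b - a)})^2) = E/2 := by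
    rw [le_antisymm hupper hmlow, Real.sq_sqrt hfrac,
      show (1 : ℝ) - (1 - E^2/4) = (E/2)^2 by ring]
    exact Real.sqrt_sq (by positivity)
  rw [hlogarg, harg, hform, log_eq_two_arsinh hα0' hαβlt hβ1']
  have hWpos : 0 ≤ (β-α)/(2*Real.sqrt (α*β*(1-α)*(1-β))) :=
    div_nonneg (by linarith) (by positivity)
  set W := (β-α)/(2*Real.sqrt (α*β*(1-α)*(1-β))) with hWdef
  have hc : 1 ≤ 2/E := by rw [le_div_iff₀ hEpos]; linarith
  constructor
  · have h1 : W ≤ (2/E)*W := le_mul_of_one_le_left hWpos hc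
    have h2 := Real.arsinh_le_arsinh.mpr h1
    linarith
  · have h2 : Real.arsinh ((2/E)*W) ≤ (2/E) * Real.arsinh W := arsinh_mul_le hc hWpos
    have h3 : 2 * Real.arsinh W / (E/2) = 2 * ((2/E) * Real.arsinh W) := by
      field_simp
    linarith [mul_le_mul_of_nonneg_left h2 (by norm_num : (0:ℝ) ≤ 2), h3.symm.le]
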